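/- arXiv:1506.07406 — 2 statements merged into one kernel-verified Lean document; each statement's English description precedes it below -/
import Mathlib

section
/- Let g(x) = G(x, e^{h(x)}) with G ∈ ℤ[X,Y], h ∈ ℤ[X], deg_X(G) ≤ d_X, deg_Y(G) ≤ d_Y, deg(h) ≤ δ. Then for every ν ∈ ℕ, the ν-th derivative g^{(ν)}(x) equals ᵛG̃(x, e^{h(x)}) for a polynomial ᵛG̃ ∈ ℤ[X,Y] with deg_X(ᵛG̃) ≤ ν(δ−1) + d_X, deg_Y(ᵛG̃) ≤ d_Y, and H(ᵛG̃) ≤ H(G)·∏_{j=0}^{ν−1} (j(δ−1) + d_X + d_Y δ² H(h)). -/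
/-- Height of an integer polynomial: max absolute value of its coefficients. -/
def heightP (h : Polynomial ℤ) : ℕ := h.support.sup fun i => (h.coeff i).natAbs

/-- Height of an integer bivariate polynomial. -/
def heightM (G : MvPolynomial (Fin 2) ℤ) : ℕ :=
  G.support.sup fun m => (MvPolynomial.coeff m G).natAbs

/-- The operation `G ↦ G̃ = ∂G/∂X + h'(X)·Y·∂G/∂Y`. -/
noncomputable def etld (h : Polynomial ℤ) (G : MvPolynomial (Fin 2) ℤ) :
    MvPolynomial (Fin 2) ℤ :=
  MvPolynomial.pderiv 0 G +
    Polynomial.aeval (MvPolynomial.X 0) (Polynomial.derivative h) *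
      MvPolynomial.X 1 * MvPolynomial.pderiv 1 G

open MvPolynomial

lemma coeff_pderiv' (i : Fin 2) (G : MvPolynomial (Fin 2) ℤ) (m : Fin 2 →₀ ℕ) :
    MvPolynomial.coeff m (MvPolynomial.pderiv i G)
      = (m i + 1 : ℤ) * MvPolynomial.coeff (m + Finsupp.single i 1) G := by
  induction G using MvPolynomial.induction_on' with
  | monomial s a =>
    rw [pderiv_monomial]
    by_cases hsi : s i = 0
    · have hs : s - Finsupp.single i 1 = s := by
        ext j
        rcases eq_or_ne j i with rfl | hji
        · simp [hsi]
        · simp [Finsupp.single_apply, hji.symm, Ne.symm hji]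
      rw [hs, coeff_monomial, coeff_monomial]
      have : ¬ s = m + Finsupp.single i 1 := by
        intro hh
        apply absurd hsi
        simp [hh]
      simp [this, hsi]
    · rw [coeff_monomial, coeff_monomial]
      have hle : Finsupp.single i 1 ≤ s := by
        rw [Finsupp.single_le_iff]
        omega
      by_cases hm : s - Finsupp.single i 1 = m
      · have hs : s = m + Finsupp.single i 1 := by
          rw [← hm, tsub_add_cancel_of_le hle]
        have hmi : m i = s i - 1 := by
          rw [← hm]; simp
        simp only [hm, hs, if_pos rfl, add_tsub_cancel_right, if_true, Finsupp.add_apply,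
          Finsupp.single_apply, if_pos rfl]
        push_cast; ring
      · have : ¬ s = m + Finsupp.single i 1 := by
          intro hh
          apply hm
          rw [hh]; simp
        simp [hm, this]
  | add p q hp hq => simp [hp, hq]; ring


lemma natAbs_coeff_le_heightM (G : MvPolynomial (Fin 2) ℤ) (m : Fin 2 →₀ ℕ) :
    (MvPolynomial.coeff m G).natAbs ≤ heightM G := by
  by_cases hm : m ∈ G.support
  · exact Finset.le_sup (f := fun m => (MvPolynomial.coeff m G).natAbs) hm
  · rw [MvPolynomial.notMem_support_iff] at hm
    simp [hm]

lemma heightM_le {G : MvPolynomial (Fin 2) ℤ} {c : ℕ}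
    (H : ∀ m, (MvPolynomial.coeff m G).natAbs ≤ c) : heightM G ≤ c :=
  Finset.sup_le fun m _ => H m

lemma natAbs_coeff_le_heightP (h : Polynomial ℤ) (k : ℕ) :
    (h.coeff k).natAbs ≤ heightP h := by
  by_cases hm : k ∈ h.support
  · exact Finset.le_sup (f := fun i => (h.coeff i).natAbs) hm
  · rw [Polynomial.notMem_support_iff] at hm
    simp [hm]

lemma natAbs_coeff_derivative_le (h : Polynomial ℤ) (k : ℕ) :
    ((Polynomial.derivative h).coeff k).natAbs ≤ h.natDegree * heightP h := by
  rw [Polynomial.coeff_derivative]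
  by_cases hc : h.coeff (k + 1) = 0
  · simp [hc]
  · have h1 : k + 1 ≤ h.natDegree := Polynomial.le_natDegree_of_ne_zero hc
    rw [Int.natAbs_mul]
    have h2 : ((k : ℤ) + 1).natAbs = k + 1 := by omega
    rw [h2]
    exact Nat.mul_le_mul (natAbs_coeff_le_heightP h (k + 1)) h1 |>.trans
      (by rw [Nat.mul_comm])

noncomputable def emb (p : Polynomial ℤ) : MvPolynomial (Fin 2) ℤ :=
  Polynomial.aeval (MvPolynomial.X 0) p

lemma emb_eq_sum (p : Polynomial ℤ) :
    emb p = ∑ k ∈ p.support, MvPolynomial.monomial (Finsupp.single 0 k) (p.coeff k) := by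
  rw [emb, Polynomial.aeval_def, Polynomial.eval₂_eq_sum, Polynomial.sum_def]
  refine Finset.sum_congr rfl fun k _ => ?_
  rw [MvPolynomial.X_pow_eq_monomial]
  rw [show (algebraMap ℤ (MvPolynomial (Fin 2) ℤ)) (p.coeff k) = MvPolynomial.C (p.coeff k) from rfl]
  rw [MvPolynomial.C_mul_monomial, mul_one]

lemma degreeOf_emb_le (p : Polynomial ℤ) (j : Fin 2) :
    MvPolynomial.degreeOf j (emb p) ≤ if j = 0 then p.natDegree else 0 := by
  rw [emb_eq_sum]
  refine (MvPolynomial.degreeOf_sum_le _ _ _).trans (Finset.sup_le fun k hk => ?_)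
  refine MvPolynomial.degreeOf_le_iff.mpr fun m hm => ?_
  have := MvPolynomial.support_monomial_subset hm
  rw [Finset.mem_singleton] at this
  subst this
  rcases eq_or_ne j 0 with rfl | hj
  · simp only [if_pos rfl, Finsupp.single_eq_same]
    exact Polynomial.le_natDegree_of_ne_zero (Polynomial.mem_support_iff.mp hk)
  · simp [Finsupp.single_apply, Ne.symm hj, hj]

lemma card_support_derivative_le (h : Polynomial ℤ) :
    (Polynomial.derivative h).support.card ≤ h.natDegree := by
  by_cases hd : Polynomial.derivative h = 0
  · simp [hd]
  · have h1 : (Polynomial.derivative h).support.card ≤ (Polynomial.derivative h).natDegree + 1 := by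
      calc (Polynomial.derivative h).support.card
          ≤ (Finset.range ((Polynomial.derivative h).natDegree + 1)).card :=
            Finset.card_le_card Polynomial.supp_subset_range_natDegree_succ
        _ = (Polynomial.derivative h).natDegree + 1 := Finset.card_range _
    have h2 : (Polynomial.derivative h).natDegree ≤ h.natDegree - 1 :=
      Polynomial.natDegree_derivative_le h
    have h3 : 0 < h.natDegree := by
      by_contra hn
      push_neg at hn
      exact hd (Polynomial.derivative_of_natDegree_zero (by omega))
    omega


lemma etld_def' (h : Polynomial ℤ) (G : MvPolynomial (Fin 2) ℤ) :
    etld h G = MvPolynomial.pderiv 0 G +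
      emb (Polynomial.derivative h) * (MvPolynomial.X 1 * MvPolynomial.pderiv 1 G) := by
  rw [etld, emb, mul_assoc]

lemma etld_add (h : Polynomial ℤ) (p q : MvPolynomial (Fin 2) ℤ) :
    etld h (p + q) = etld h p + etld h q := by
  simp only [etld, map_add]; ring

lemma etld_mul (h : Polynomial ℤ) (p q : MvPolynomial (Fin 2) ℤ) :
    etld h (p * q) = etld h p * q + p * etld h q := by
  simp only [etld, pderiv_mul]; ring

lemma etld_C (h : Polynomial ℤ) (a : ℤ) : etld h (MvPolynomial.C a) = 0 := by
  simp [etld, pderiv_C]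

lemma etld_X0 (h : Polynomial ℤ) : etld h (MvPolynomial.X 0) = 1 := by
  simp [etld]

lemma etld_X1 (h : Polynomial ℤ) :
    etld h (MvPolynomial.X 1) = emb (Polynomial.derivative h) * MvPolynomial.X 1 := by
  simp [etld, emb]

lemma aeval_emb (v : Fin 2 → ℝ) (p : Polynomial ℤ) :
    MvPolynomial.aeval v (emb p) = Polynomial.aeval (v 0) p := by
  rw [emb, ← Polynomial.aeval_algHom_apply]
  simp

lemma hasDerivAt_aeval_poly (h : Polynomial ℤ) (x : ℝ) :
    HasDerivAt (fun t : ℝ => Polynomial.aeval t h)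
      (Polynomial.aeval x (Polynomial.derivative h)) x := by
  have key := (h.map (algebraMap ℤ ℝ)).hasDerivAt x
  have e1 : ∀ t : ℝ, (h.map (algebraMap ℤ ℝ)).eval t = Polynomial.aeval t h := by
    intro t; rw [Polynomial.eval_map, Polynomial.aeval_def]
  have e2 : (Polynomial.derivative (h.map (algebraMap ℤ ℝ))).eval x
      = Polynomial.aeval x (Polynomial.derivative h) := by
    rw [Polynomial.derivative_map, Polynomial.eval_map, Polynomial.aeval_def]
  rw [← e2]
  simpa only [e1] using key

lemma hasDerivAt_key (h : Polynomial ℤ) (G : MvPolynomial (Fin 2) ℤ) (x : ℝ) :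
    HasDerivAt (fun t => MvPolynomial.aeval ![t, Real.exp (Polynomial.aeval t h)] G)
      (MvPolynomial.aeval ![x, Real.exp (Polynomial.aeval x h)] (etld h G)) x := by
  induction G using MvPolynomial.induction_on with
  | C a =>
    rw [etld_C, map_zero]
    simp only [MvPolynomial.aeval_C]
    exact hasDerivAt_const x _
  | add p q hp hq =>
    have hpq := hp.add hq
    simp only [etld_add, map_add]
    exact hpq
  | mul_X p i hp =>
    fin_cases i
    · show HasDerivAt
        (fun t => MvPolynomial.aeval ![t, Real.exp (Polynomial.aeval t h)] (p * MvPolynomial.X 0))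
        (MvPolynomial.aeval ![x, Real.exp (Polynomial.aeval x h)] (etld h (p * MvPolynomial.X 0))) x
      have hd := hp.mul (hasDerivAt_id x)
      have hfun : (fun t : ℝ =>
          MvPolynomial.aeval ![t, Real.exp (Polynomial.aeval t h)] (p * MvPolynomial.X 0))
          = fun t => (MvPolynomial.aeval ![t, Real.exp (Polynomial.aeval t h)] p) * t := by
        funext t; simp
      rw [hfun]
      refine hd.congr_deriv ?_
      rw [etld_mul, etld_X0]
      simp
    · show HasDerivAt
        (fun t => MvPolynomial.aeval ![t, Real.exp (Polynomial.aeval t h)] (p * MvPolynomial.X 1))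
        (MvPolynomial.aeval ![x, Real.exp (Polynomial.aeval x h)] (etld h (p * MvPolynomial.X 1))) x
      have hexp : HasDerivAt (fun t : ℝ => Real.exp (Polynomial.aeval t h))
          (Real.exp (Polynomial.aeval x h) * Polynomial.aeval x (Polynomial.derivative h)) x :=
        (hasDerivAt_aeval_poly h x).exp
      have hd := hp.mul hexp
      have hfun : (fun t : ℝ =>
          MvPolynomial.aeval ![t, Real.exp (Polynomial.aeval t h)] (p * MvPolynomial.X 1))
          = fun t => (MvPolynomial.aeval ![t, Real.exp (Polynomial.aeval t h)] p) *
              Real.exp (Polynomial.aeval t h) := by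
        funext t; simp
      rw [hfun]
      refine hd.congr_deriv ?_
      rw [etld_mul, etld_X1]
      simp only [map_add, map_mul, MvPolynomial.aeval_X, aeval_emb, Matrix.cons_val_one,
        Matrix.head_cons, Matrix.cons_val_zero]
      ring

lemma degreeOf_pderiv_le (i j : Fin 2) (G : MvPolynomial (Fin 2) ℤ) :
    MvPolynomial.degreeOf j (MvPolynomial.pderiv i G) ≤ MvPolynomial.degreeOf j G := by
  refine MvPolynomial.degreeOf_le_iff.mpr fun m hm => ?_
  rw [MvPolynomial.mem_support_iff, coeff_pderiv'] at hm
  have hc : MvPolynomial.coeff (m + Finsupp.single i 1) G ≠ 0 := by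
    intro h0; apply hm; rw [h0, mul_zero]
  calc m j ≤ (m + Finsupp.single i 1 : Fin 2 →₀ ℕ) j := by
        rw [Finsupp.add_apply]; exact Nat.le_add_right _ _
    _ ≤ MvPolynomial.degreeOf j G :=
      MvPolynomial.monomial_le_degreeOf j (MvPolynomial.mem_support_iff.mpr hc)

lemma natAbs_coeff_pderiv_le (i : Fin 2) (G : MvPolynomial (Fin 2) ℤ) (m : Fin 2 →₀ ℕ) :
    (MvPolynomial.coeff m (MvPolynomial.pderiv i G)).natAbs
      ≤ MvPolynomial.degreeOf i G * heightM G := by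
  rw [coeff_pderiv']
  by_cases hc : MvPolynomial.coeff (m + Finsupp.single i 1) G = 0
  · simp [hc]
  · have h1 : m i + 1 ≤ MvPolynomial.degreeOf i G := by
      have := MvPolynomial.monomial_le_degreeOf i (MvPolynomial.mem_support_iff.mpr hc)
      simpa using this
    rw [Int.natAbs_mul]
    have h2 : ((m i : ℤ) + 1).natAbs = m i + 1 := by omega
    rw [h2]
    exact Nat.mul_le_mul h1 (natAbs_coeff_le_heightM G _)

lemma degY_X1_mul_pderiv (G : MvPolynomial (Fin 2) ℤ) :
    MvPolynomial.degreeOf 1 (MvPolynomial.X 1 * MvPolynomial.pderiv 1 G)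
      ≤ MvPolynomial.degreeOf 1 G := by
  refine MvPolynomial.degreeOf_le_iff.mpr fun m hm => ?_
  rw [MvPolynomial.support_X_mul, Finset.mem_map] at hm
  obtain ⟨m', hm', rfl⟩ := hm
  rw [MvPolynomial.mem_support_iff, coeff_pderiv'] at hm'
  have hc : MvPolynomial.coeff (m' + Finsupp.single 1 1) G ≠ 0 := by
    intro h0; apply hm'; rw [h0, mul_zero]
  have := MvPolynomial.monomial_le_degreeOf 1 (MvPolynomial.mem_support_iff.mpr hc)
  simpa [addLeftEmbedding_apply, add_comm] using this

lemma etld_degreeOf0 (h : Polynomial ℤ) (G : MvPolynomial (Fin 2) ℤ) :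
    MvPolynomial.degreeOf 0 (etld h G) ≤ (h.natDegree - 1) + MvPolynomial.degreeOf 0 G := by
  rw [etld_def']
  refine (MvPolynomial.degreeOf_add_le _ _ _).trans (max_le ?_ ?_)
  · exact (degreeOf_pderiv_le 0 0 G).trans (Nat.le_add_left _ _)
  · refine (MvPolynomial.degreeOf_mul_le _ _ _).trans ?_
    have h1 : MvPolynomial.degreeOf 0 (emb (Polynomial.derivative h)) ≤ h.natDegree - 1 := by
      have := degreeOf_emb_le (Polynomial.derivative h) 0
      simpa using this.trans (Polynomial.natDegree_derivative_le h)
    have h2 : MvPolynomial.degreeOf 0 (MvPolynomial.X 1 * MvPolynomial.pderiv 1 G)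
        ≤ MvPolynomial.degreeOf 0 G := by
      refine (MvPolynomial.degreeOf_mul_le _ _ _).trans ?_
      have hx : MvPolynomial.degreeOf 0 (MvPolynomial.X (1 : Fin 2) : MvPolynomial (Fin 2) ℤ)
          = 0 := by
        rw [MvPolynomial.degreeOf_X]
        simp
      rw [hx, zero_add]
      exact degreeOf_pderiv_le 1 0 G
    omega
  
lemma etld_degreeOf1 (h : Polynomial ℤ) (G : MvPolynomial (Fin 2) ℤ) :
    MvPolynomial.degreeOf 1 (etld h G) ≤ MvPolynomial.degreeOf 1 G := by
  rw [etld_def']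
  refine (MvPolynomial.degreeOf_add_le _ _ _).trans (max_le ?_ ?_)
  · exact degreeOf_pderiv_le 0 1 G
  · refine (MvPolynomial.degreeOf_mul_le _ _ _).trans ?_
    have h1 : MvPolynomial.degreeOf 1 (emb (Polynomial.derivative h)) = 0 := by
      have := degreeOf_emb_le (Polynomial.derivative h) 1
      simpa using this
    rw [h1, zero_add]
    exact degY_X1_mul_pderiv G

lemma natAbs_sum_le' {ι : Type*} (s : Finset ι) (f : ι → ℤ) :
    (∑ i ∈ s, f i).natAbs ≤ ∑ i ∈ s, (f i).natAbs := by
  classical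
  induction s using Finset.induction with
  | empty => simp
  | insert _ _ hns ih =>
    rw [Finset.sum_insert hns, Finset.sum_insert hns]
    exact (Int.natAbs_add_le _ _).trans (Nat.add_le_add_left ih _)

lemma natAbs_coeff_etld_le (h : Polynomial ℤ) (G : MvPolynomial (Fin 2) ℤ) (m : Fin 2 →₀ ℕ) :
    (MvPolynomial.coeff m (etld h G)).natAbs
      ≤ MvPolynomial.degreeOf 0 G * heightM G +
        h.natDegree * ((h.natDegree * heightP h) *
          (MvPolynomial.degreeOf 1 G * heightM G)) := by
  rw [etld_def', MvPolynomial.coeff_add]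
  refine (Int.natAbs_add_le _ _).trans (Nat.add_le_add (natAbs_coeff_pderiv_le 0 G m) ?_)
  set Q := MvPolynomial.X 1 * MvPolynomial.pderiv 1 G with hQ
  have hQbound : ∀ m' : Fin 2 →₀ ℕ, (MvPolynomial.coeff m' Q).natAbs
      ≤ MvPolynomial.degreeOf 1 G * heightM G := by
    intro m'
    rw [hQ, MvPolynomial.coeff_X_mul']
    split_ifs with hsp
    · exact natAbs_coeff_pderiv_le 1 G _
    · simp
  rw [emb_eq_sum, Finset.sum_mul]
  rw [MvPolynomial.coeff_sum]
  refine (natAbs_sum_le' _ _).trans ?_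
  calc ∑ k ∈ (Polynomial.derivative h).support,
        (MvPolynomial.coeff m
          (MvPolynomial.monomial (Finsupp.single 0 k) ((Polynomial.derivative h).coeff k) * Q)).natAbs
      ≤ ∑ _k ∈ (Polynomial.derivative h).support,
          (h.natDegree * heightP h) * (MvPolynomial.degreeOf 1 G * heightM G) := by
        refine Finset.sum_le_sum fun k _ => ?_
        rw [MvPolynomial.coeff_monomial_mul']
        split_ifs with hle
        · rw [Int.natAbs_mul]
          exact Nat.mul_le_mul (natAbs_coeff_derivative_le h k) (hQbound _)
        · simp
    _ = (Polynomial.derivative h).support.card *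
          ((h.natDegree * heightP h) * (MvPolynomial.degreeOf 1 G * heightM G)) := by
        rw [Finset.sum_const, smul_eq_mul]
    _ ≤ h.natDegree * ((h.natDegree * heightP h) * (MvPolynomial.degreeOf 1 G * heightM G)) :=
        Nat.mul_le_mul_right _ (card_support_derivative_le h)

lemma heightM_etld_le (h : Polynomial ℤ) (G : MvPolynomial (Fin 2) ℤ) :
    heightM (etld h G) ≤
      (MvPolynomial.degreeOf 0 G + MvPolynomial.degreeOf 1 G * h.natDegree ^ 2 * heightP h) *
        heightM G := by
  refine heightM_le fun m => (natAbs_coeff_etld_le h G m).trans (Nat.le_of_eq ?_)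
  ring

theorem stmt_12 (G : MvPolynomial (Fin 2) ℤ) (h : Polynomial ℤ) (dX dY δ : ℕ)
    (hdX : MvPolynomial.degreeOf 0 G ≤ dX) (hdY : MvPolynomial.degreeOf 1 G ≤ dY)
    (hδ : h.natDegree ≤ δ) :
    ∀ ν : ℕ,
      (∀ x : ℝ,
        iteratedDeriv ν (fun t => MvPolynomial.aeval ![t, Real.exp (Polynomial.aeval t h)] G) x
          = MvPolynomial.aeval ![x, Real.exp (Polynomial.aeval x h)] ((etld h)^[ν] G)) ∧
      MvPolynomial.degreeOf 0 ((etld h)^[ν] G) ≤ ν * (δ - 1) + dX ∧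
      MvPolynomial.degreeOf 1 ((etld h)^[ν] G) ≤ dY ∧
      heightM ((etld h)^[ν] G) ≤ heightM G *
        ∏ j ∈ Finset.range ν, (j * (δ - 1) + dX + dY * δ ^ 2 * heightP h) := by
  intro ν
  induction ν with
  | zero =>
    refine ⟨fun x => by simp, by simpa using hdX, by simpa using hdY, by simp⟩
  | succ ν ih =>
    obtain ⟨ihd, ih0, ih1, ihH⟩ := ih
    refine ⟨?_, ?_, ?_, ?_⟩
    · intro x
      rw [iteratedDeriv_succ]
      have hfun : iteratedDeriv ν
            (fun t => MvPolynomial.aeval ![t, Real.exp (Polynomial.aeval t h)] G)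
          = fun t => MvPolynomial.aeval ![t, Real.exp (Polynomial.aeval t h)] ((etld h)^[ν] G) :=
        funext ihd
      rw [hfun, Function.iterate_succ_apply']
      exact (hasDerivAt_key h _ x).deriv
    · rw [Function.iterate_succ_apply']
      refine (etld_degreeOf0 h _).trans ?_
      have h1 : h.natDegree - 1 ≤ δ - 1 := by omega
      calc h.natDegree - 1 + MvPolynomial.degreeOf 0 ((etld h)^[ν] G)
          ≤ (δ - 1) + (ν * (δ - 1) + dX) := Nat.add_le_add h1 ih0
        _ = (ν + 1) * (δ - 1) + dX := by ring
    · rw [Function.iterate_succ_apply']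
      exact (etld_degreeOf1 h _).trans ih1
    · rw [Function.iterate_succ_apply']
      refine (heightM_etld_le h _).trans ?_
      have hfac : MvPolynomial.degreeOf 0 ((etld h)^[ν] G) +
            MvPolynomial.degreeOf 1 ((etld h)^[ν] G) * h.natDegree ^ 2 * heightP h
          ≤ ν * (δ - 1) + dX + dY * δ ^ 2 * heightP h := by
        have hp2 : h.natDegree ^ 2 ≤ δ ^ 2 := Nat.pow_le_pow_left hδ 2
        exact Nat.add_le_add ih0 (Nat.mul_le_mul (Nat.mul_le_mul ih1 hp2) le_rfl)
      calc (MvPolynomial.degreeOf 0 ((etld h)^[ν] G) +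
            MvPolynomial.degreeOf 1 ((etld h)^[ν] G) * h.natDegree ^ 2 * heightP h) *
              heightM ((etld h)^[ν] G)
          ≤ (ν * (δ - 1) + dX + dY * δ ^ 2 * heightP h) *
              (heightM G * ∏ j ∈ Finset.range ν, (j * (δ - 1) + dX + dY * δ ^ 2 * heightP h)) :=
            Nat.mul_le_mul hfac ihH
        _ = heightM G *
              ∏ j ∈ Finset.range (ν + 1), (j * (δ - 1) + dX + dY * δ ^ 2 * heightP h) := by
            rw [Finset.prod_range_succ]; ring
end

section
/- Let f₀ be continuous on (a, b) and (f₀, …, f_N) a Sturm sequence for f₀ on (a, b), and suppose f₀ extends continuously and is analytic on an open interval containing [a,b] with all f_i nonzero analytic. Then the number of zeros of f₀ in the open interval (a, b) equals v(f, a⁺) − v(f, b⁻), where v(f, a⁺) counts sign variations of (sg(f₀, a⁺), …, sg(f_N, a⁺)) and sg(g, c⁺) (resp. sg(g, c⁻)) is the constant sign g takes immediately to the right (resp. left) of c. -/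
/-- Number of sign variations of a tuple of reals (zeros removed). -/
noncomputable def signVar (l : List ℝ) : ℕ :=
  let l' := l.filter (fun x => decide (x ≠ 0))
  (l'.zip l'.tail).countP (fun q => decide (q.1 * q.2 < 0))

/-- Heindel's notion of a Sturm sequence for `f 0` on `(a,b)`. -/
def IsSturmSequence (a b : ℝ) (N : ℕ) (f : ℕ → ℝ → ℝ) : Prop :=
  (∀ i ≤ N, ContinuousOn (f i) (Set.Ioo a b)) ∧
  (∀ y ∈ Set.Ioo a b, f 0 y = 0 →
    ∃ ε > 0, Set.Ioo (y - ε) (y + ε) ⊆ Set.Ioo a b ∧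
      (∀ x ∈ Set.Ioo (y - ε) (y + ε), x ≠ y → f 1 x ≠ 0) ∧
      (∀ x, y - ε < x → x < y → f 0 x * f 1 x < 0) ∧
      (∀ x, y < x → x < y + ε → f 0 x * f 1 x > 0)) ∧
  (∀ i, 1 ≤ i → i + 1 ≤ N → ∀ x ∈ Set.Ioo a b, f i x = 0 →
      f (i - 1) x * f (i + 1) x < 0) ∧
  (∀ x ∈ Set.Ioo a b, f N x ≠ 0)

/-- Multiplicity of `c` as a zero of `g`: the least `r` with `g^{(r)}(c) ≠ 0`. -/
noncomputable def zmult (g : ℝ → ℝ) (c : ℝ) : ℕ :=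
  sInf {r | iteratedDeriv r g c ≠ 0}

/-- The sign `g` takes immediately to the right of `c`. -/
noncomputable def sgRight (g : ℝ → ℝ) (c : ℝ) : ℝ :=
  Real.sign (iteratedDeriv (zmult g c) g c)

/-- The sign `g` takes immediately to the left of `c`. -/
noncomputable def sgLeft (g : ℝ → ℝ) (c : ℝ) : ℝ :=
  Real.sign ((-1) ^ (zmult g c) * iteratedDeriv (zmult g c) g c)

section Helpers

lemma mulposchain {x y z : ℝ} (h1 : 0 < x * y) (h2 : 0 < y * z) : 0 < x * z := by
  nlinarith [mul_pos h1 h2, sq_nonneg y]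

lemma sign_trich (x : ℝ) : Real.sign x = -1 ∨ Real.sign x = 0 ∨ Real.sign x = 1 := by
  rcases lt_trichotomy x 0 with h | h | h
  · exact Or.inl (Real.sign_of_neg h)
  · exact Or.inr (Or.inl (by simp [h, Real.sign_zero]))
  · exact Or.inr (Or.inr (Real.sign_of_pos h))

lemma mul_sign_pos {x : ℝ} (h : x ≠ 0) : 0 < x * Real.sign x := by
  rcases h.lt_or_gt with h' | h'
  · rw [Real.sign_of_neg h']; nlinarith
  · rw [Real.sign_of_pos h']; nlinarith

lemma sign_eq_of_mul_pos {r s : ℝ}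
    (hr : r = -1 ∨ r = 0 ∨ r = 1) (hs : s = -1 ∨ s = 0 ∨ s = 1)
    (h : 0 < r * s) : r = s := by
  rcases hr with h1 | h1 | h1 <;> rcases hs with h2 | h2 | h2 <;> subst h1 <;> subst h2 <;>
    first | rfl | (exfalso; norm_num at h)

lemma sign_mul_sign_neg {x y : ℝ} (h : x * y < 0) :
    Real.sign x * Real.sign y < 0 := by
  rcases lt_trichotomy x 0 with hx | hx | hx <;> rcases lt_trichotomy y 0 with hy | hy | hy <;>
    simp_all [Real.sign_of_neg, Real.sign_of_pos] <;> nlinarith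

lemma pos_of_chain {x y s t : ℝ} (h1 : 0 < x * s) (h2 : 0 < y * t) (h3 : 0 < x * y) :
    0 < s * t := by
  have h4 : 0 < (x * y) * (s * t) := by
    rw [show (x * y) * (s * t) = (x * s) * (y * t) from by ring]
    exact mul_pos h1 h2
  rcases mul_pos_iff.mp h4 with ⟨_, h⟩ | ⟨h, _⟩
  · exact h
  · exact absurd h3 (not_lt.mpr h.le)

lemma neg_of_chain {x y s t : ℝ} (h1 : 0 < x * s) (h2 : 0 < y * t) (h3 : x * y < 0) :
    s * t < 0 := by
  have h4 : 0 < (x * y) * (s * t) := by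
    rw [show (x * y) * (s * t) = (x * s) * (y * t) from by ring]
    exact mul_pos h1 h2
  rcases mul_pos_iff.mp h4 with ⟨h, _⟩ | ⟨_, h⟩
  · exact absurd h3 (not_lt.mpr h.le)
  · exact h

@[simp] lemma signVar_nil : signVar [] = 0 := by simp [signVar]

@[simp] lemma signVar_singleton' (x : ℝ) : signVar [x] = 0 := by
  unfold signVar; by_cases h : x = 0 <;> simp [h]

lemma signVar_cons_zero (l : List ℝ) : signVar (0 :: l) = signVar l := by
  simp [signVar]

lemma signVar_cons_cons_zero (x : ℝ) (l : List ℝ) :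
    signVar (x :: 0 :: l) = signVar (x :: l) := by
  simp [signVar, List.filter_cons]

lemma signVar_cons_cons {x y : ℝ} (hx : x ≠ 0) (hy : y ≠ 0) (l : List ℝ) :
    signVar (x :: y :: l) = (if x * y < 0 then 1 else 0) + signVar (y :: l) := by
  unfold signVar
  have hf : List.filter (fun x => decide (x ≠ 0)) (x :: y :: l)
      = x :: y :: List.filter (fun x => decide (x ≠ 0)) l := by
    simp [List.filter_cons, hx, hy]
  have hf2 : List.filter (fun x => decide (x ≠ 0)) (y :: l)
      = y :: List.filter (fun x => decide (x ≠ 0)) l := by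
    simp [List.filter_cons, hy]
  simp only [hf, hf2, List.tail_cons]
  have hz : ∀ (m : List ℝ), ((x :: y :: m).zip (y :: m)) = (x, y) :: ((y :: m).zip m) := by
    intro m; rfl
  rw [hz, List.countP_cons]
  by_cases h : x * y < 0 <;> simp [h] <;> omega

lemma ofFn_shift (g : ℕ → ℝ) (n : ℕ) :
    (List.ofFn fun i : Fin (n+1) => g ↑i) = g 0 :: (List.ofFn fun i : Fin n => g (↑i + 1)) := by
  rw [List.ofFn_succ]
  congr 1

lemma var_pair {x0 x1 x2 : ℝ} (h02 : x0 * x2 < 0) (h1 : x1 ≠ 0) :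
    ((if x0 * x1 < 0 then 1 else 0) : ℕ) + (if x1 * x2 < 0 then 1 else 0) = 1 := by
  have hx1 : 0 < x1 * x1 := mul_self_pos.mpr h1
  by_cases ha : x0 * x1 < 0 <;> by_cases hb : x1 * x2 < 0 <;> simp [ha, hb]
  · nlinarith [mul_pos_of_neg_of_neg ha hb]
  · nlinarith [mul_nonneg (not_lt.mp ha) (not_lt.mp hb)]

lemma key_comb (n : ℕ) : ∀ (u w : ℕ → ℝ),
    (∀ i ≤ n, w i ≠ 0) →
    (∀ i ≤ n, u i ≠ 0 → w i = u i) →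
    (∀ i, 0 < i → i < n → u i = 0 → u (i-1) * u (i+1) < 0) →
    u 0 ≠ 0 → u n ≠ 0 →
    signVar (List.ofFn fun i : Fin (n+1) => w ↑i) =
      signVar (List.ofFn fun i : Fin (n+1) => u ↑i) := by
  induction n using Nat.strong_induction_on with
  | _ n ih =>
  intro u w hw hwu hmid h0 hn
  match n, ih, hw, hwu, hmid, hn with
  | 0, ih, hw, hwu, hmid, hn =>
    rw [ofFn_shift w 0, ofFn_shift u 0]
    simp [signVar_singleton']
  | (m+1), ih, hw, hwu, hmid, hn =>
    have hw0 : w 0 ≠ 0 := hw 0 (by omega)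
    have hw1 : w 1 ≠ 0 := hw 1 (by omega)
    rw [ofFn_shift w (m+1), ofFn_shift (fun k => w (k+1)) m, ofFn_shift u (m+1),
        ofFn_shift (fun k => u (k+1)) m]
    norm_num [add_assoc]
    by_cases hu1 : u 1 = 0
    · match m, ih, hw, hwu, hmid, hn with
      | 0, ih, hw, hwu, hmid, hn => exact absurd hu1 hn
      | (m'+1), ih, hw, hwu, hmid, hn =>
        have h02 : u 0 * u 2 < 0 := by
          have := hmid 1 (by omega) (by omega) hu1
          simpa using this
        have hu2 : u 2 ≠ 0 := by rintro h; rw [h, mul_zero] at h02; exact lt_irrefl 0 h02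
        have hw2 : w 2 ≠ 0 := hw 2 (by omega)
        have ew0 : w 0 = u 0 := hwu 0 (by omega) h0
        have ew2 : w 2 = u 2 := hwu 2 (by omega) hu2
        rw [ofFn_shift (fun k => w (k+2)) m', ofFn_shift (fun k => u (k+2)) m']
        norm_num [add_assoc]
        rw [hu1, signVar_cons_cons_zero]
        rw [signVar_cons_cons hw0 hw1, signVar_cons_cons hw1 hw2,
            signVar_cons_cons h0 hu2]
        have hrec := ih m' (by omega) (fun k => u (k+2)) (fun k => w (k+2))
          (fun i _ => hw (i+2) (by omega)) (fun i _ h => hwu (i+2) (by omega) h)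
          (fun i hi1 hi2 h => by
            have := hmid (i+2) (by omega) (by omega) h
            have e : i + 2 - 1 = i - 1 + 2 := by omega
            rw [e] at this
            have e2 : i + 2 + 1 = i + 1 + 2 := by omega
            rw [e2] at this
            exact this)
          (by simpa using hu2) (by exact hn)
        rw [ofFn_shift (fun k => w (k+2)) m', ofFn_shift (fun k => u (k+2)) m'] at hrec
        norm_num [add_assoc] at hrec
        rw [hrec, ew0, ew2, if_pos h02]
        have hvp := var_pair h02 hw1
        omega
    · have ew0 : w 0 = u 0 := hwu 0 (by omega) h0
      have ew1 : w 1 = u 1 := hwu 1 (by omega) hu1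
      rw [signVar_cons_cons hw0 hw1, signVar_cons_cons h0 hu1]
      have hrec := ih m (by omega) (fun k => u (k+1)) (fun k => w (k+1))
        (fun i _ => hw (i+1) (by omega)) (fun i _ h => hwu (i+1) (by omega) h)
        (fun i hi1 hi2 h => by
          have := hmid (i+1) (by omega) (by omega) h
          have e : i + 1 - 1 = i - 1 + 1 := by omega
          rw [e] at this
          exact this)
        (by simpa using hu1) (by simpa using hn)
      rw [ofFn_shift (fun k => w (k+1)) m, ofFn_shift (fun k => u (k+1)) m] at hrec
      norm_num [add_assoc] at hrec
      rw [hrec, ew0, ew1]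

end Helpers

section Analytic

open Filter Topology

lemma sgRight_of_ne_zero {g : ℝ → ℝ} {c : ℝ} (h : g c ≠ 0) :
    sgRight g c = Real.sign (g c) := by
  have hz : zmult g c = 0 :=
    Nat.sInf_eq_zero.mpr (Or.inl (by simp [Set.mem_setOf_eq, iteratedDeriv_zero, h]))
  rw [sgRight, hz, iteratedDeriv_zero]

lemma sgLeft_of_ne_zero {g : ℝ → ℝ} {c : ℝ} (h : g c ≠ 0) :
    sgLeft g c = Real.sign (g c) := by
  have hz : zmult g c = 0 :=
    Nat.sInf_eq_zero.mpr (Or.inl (by simp [Set.mem_setOf_eq, iteratedDeriv_zero, h]))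
  rw [sgLeft, hz, iteratedDeriv_zero, pow_zero, one_mul]

lemma sgRight_trich (g : ℝ → ℝ) (c : ℝ) :
    sgRight g c = -1 ∨ sgRight g c = 0 ∨ sgRight g c = 1 := sign_trich _

lemma sgLeft_trich (g : ℝ → ℝ) (c : ℝ) :
    sgLeft g c = -1 ∨ sgLeft g c = 0 ∨ sgLeft g c = 1 := sign_trich _

lemma local_sign {g : ℝ → ℝ} {c : ℝ} (hg : AnalyticAt ℝ g c)
    (hev : ¬ ∀ᶠ z in 𝓝 c, g z = 0) :
    sgRight g c ≠ 0 ∧ sgLeft g c ≠ 0 ∧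
    ∃ δ > 0, (∀ x, c < x → x < c + δ → 0 < g x * sgRight g c) ∧
             (∀ x, c - δ < x → x < c → 0 < g x * sgLeft g c) := by
  obtain ⟨p, hp⟩ := hg
  have hp0 : p ≠ 0 := fun h => hev (hp.locally_zero_iff.mpr h)
  set n := p.order with hn
  have hid : ∀ k, iteratedDeriv k g c = (Nat.factorial k : ℝ) * p.coeff k := by
    intro k
    obtain ⟨r, hr⟩ := hp
    have h1 := hr.factorial_smul (y := (1:ℝ)) k
    rw [iteratedDeriv_eq_iteratedFDeriv]
    rw [← h1, nsmul_eq_mul]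
    rfl
  have hcoeffn : p.coeff n ≠ 0 := by
    rw [FormalMultilinearSeries.coeff_eq_zero.ne]
    exact p.apply_order_ne_zero hp0
  have hfact : (0:ℝ) < (Nat.factorial n : ℝ) := by positivity
  have hder : iteratedDeriv n g c = (Nat.factorial n : ℝ) * p.coeff n := hid n
  have hzm : zmult g c = n := by
    apply le_antisymm
    · apply Nat.sInf_le
      simp only [Set.mem_setOf_eq, hder]
      positivity
    · apply le_csInf
      · exact ⟨n, by simp only [Set.mem_setOf_eq, hder]; positivity⟩
      · intro r hr
        by_contra hlt
        push_neg at hlt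
        apply hr
        simp only [Set.mem_setOf_eq, hid r, not_not]
        have : p r = 0 := p.apply_eq_zero_of_lt_order (by exact_mod_cast hlt)
        rw [show p.coeff r = 0 from FormalMultilinearSeries.coeff_eq_zero.mpr this, mul_zero]
  set h := (Function.swap dslope c)^[n] g with hhdef
  have hh : HasFPowerSeriesAt h (FormalMultilinearSeries.fslope^[n] p) c :=
    hp.has_fpower_series_iterate_dslope_fslope n
  have hhc : h c = p.coeff n := by
    have h1 := hh.coeff_zero (fun _ => (1:ℝ))
    have h2 : (FormalMultilinearSeries.fslope^[n] p).coeff 0 = p.coeff (0 + n) :=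
      FormalMultilinearSeries.coeff_iterate_fslope n 0
    rw [zero_add] at h2
    rw [← h2, FormalMultilinearSeries.coeff]
    exact h1.symm
  have hhc0 : h c ≠ 0 := by rw [hhc]; exact hcoeffn
  have heq : ∀ᶠ z in 𝓝 c, g z = (z - c) ^ n • h z := Filter.Eventually.of_forall hp.eq_pow_order_mul_iterate_dslope
  have hcont : ContinuousAt h c := hh.continuousAt
  have hopen : IsOpen {y : ℝ | 0 < y * h c} :=
    isOpen_lt continuous_const (continuous_id.mul continuous_const)
  have hsign : ∀ᶠ z in 𝓝 c, 0 < h z * h c :=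
    hcont.preimage_mem_nhds (hopen.mem_nhds (by simp [Set.mem_setOf_eq, mul_self_pos.mpr hhc0]))
  obtain ⟨δ, hδ, hδ2⟩ := Metric.eventually_nhds_iff.mp (heq.and hsign)
  have hsR : sgRight g c = Real.sign ((Nat.factorial n : ℝ) * p.coeff n) := by
    rw [sgRight, hzm, hder]
  have hsL : sgLeft g c = Real.sign ((-1:ℝ) ^ n * ((Nat.factorial n : ℝ) * p.coeff n)) := by
    rw [sgLeft, hzm, hder]
  have hRne : sgRight g c ≠ 0 := by
    rw [hsR, Ne, Real.sign_eq_zero_iff]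
    intro hcon
    rcases mul_eq_zero.mp hcon with h' | h'
    · exact absurd h' (ne_of_gt hfact)
    · exact hcoeffn h'
  have hprodne : ((-1:ℝ) ^ n * ((Nat.factorial n : ℝ) * p.coeff n)) ≠ 0 := by
    apply mul_ne_zero
    · exact pow_ne_zero _ (by norm_num)
    · exact mul_ne_zero (ne_of_gt hfact) hcoeffn
  have hLne : sgLeft g c ≠ 0 := by
    rw [hsL, Ne, Real.sign_eq_zero_iff]
    exact hprodne
  refine ⟨hRne, hLne, δ, hδ, ?_, ?_⟩
  · intro x hx1 hx2
    have hd : dist x c < δ := by rw [Real.dist_eq, abs_lt]; constructor <;> linarith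
    obtain ⟨hgx, hhx⟩ := hδ2 hd
    have h1 : 0 < ((Nat.factorial n : ℝ) * p.coeff n) * sgRight g c := by
      rw [hsR]
      exact mul_sign_pos (mul_ne_zero (ne_of_gt hfact) hcoeffn)
    have h2 : 0 < h c * sgRight g c := by
      rw [hhc]
      rcases mul_pos_iff.mp (by rw [show ((Nat.factorial n : ℝ) * p.coeff n) * sgRight g c
          = (Nat.factorial n : ℝ) * (p.coeff n * sgRight g c) from by ring] at h1; exact h1) with
        ⟨_, h'⟩ | ⟨h', _⟩
      · exact h'
      · exact absurd hfact (not_lt.mpr h'.le)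
    have h3 : 0 < h x * sgRight g c := mulposchain hhx h2
    rw [hgx, smul_eq_mul, mul_assoc]
    exact mul_pos (pow_pos (by linarith) n) h3
  · intro x hx1 hx2
    have hd : dist x c < δ := by rw [Real.dist_eq, abs_lt]; constructor <;> linarith
    obtain ⟨hgx, hhx⟩ := hδ2 hd
    have h1 : 0 < ((-1:ℝ) ^ n * ((Nat.factorial n : ℝ) * p.coeff n)) * sgLeft g c := by
      rw [hsL]
      exact mul_sign_pos hprodne
    have h2 : 0 < h c * ((-1:ℝ) ^ n * sgLeft g c) := by
      rw [hhc]
      have h1' : 0 < (Nat.factorial n : ℝ) * (p.coeff n * ((-1:ℝ) ^ n * sgLeft g c)) := by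
        rw [show (Nat.factorial n : ℝ) * (p.coeff n * ((-1:ℝ) ^ n * sgLeft g c))
          = ((-1:ℝ) ^ n * ((Nat.factorial n : ℝ) * p.coeff n)) * sgLeft g c from by ring]
        exact h1
      rcases mul_pos_iff.mp h1' with ⟨_, h'⟩ | ⟨h', _⟩
      · exact h'
      · exact absurd hfact (not_lt.mpr h'.le)
    have h3 : 0 < h x * ((-1:ℝ) ^ n * sgLeft g c) := mulposchain hhx h2
    have key : g x * sgLeft g c = (c - x) ^ n * (h x * ((-1:ℝ) ^ n * sgLeft g c)) := by
      rw [hgx, smul_eq_mul, show (x - c) = -(c - x) from by ring, neg_pow]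
      ring
    rw [key]
    exact mul_pos (pow_pos (by linarith) n) h3

lemma sign_const_on {g : ℝ → ℝ} {u v : ℝ} (hc : ContinuousOn g (Set.Ioo u v))
    (hnz : ∀ x ∈ Set.Ioo u v, g x ≠ 0) :
    ∀ x ∈ Set.Ioo u v, ∀ y ∈ Set.Ioo u v, 0 < g x * g y := by
  have key : ∀ x y : ℝ, x ∈ Set.Ioo u v → y ∈ Set.Ioo u v → x < y → 0 < g x * g y := by
    intro x y hx hy hxy
    by_contra hcon
    push_neg at hcon
    have hne : g x * g y ≠ 0 := mul_ne_zero (hnz x hx) (hnz y hy)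
    have hlt : g x * g y < 0 := lt_of_le_of_ne hcon hne
    have hIcc : Set.Icc x y ⊆ Set.Ioo u v := Set.Icc_subset_Ioo hx.1 hy.2
    rcases mul_neg_iff.mp hlt with ⟨hxp, hyn⟩ | ⟨hxn, hyp⟩
    · obtain ⟨z, hz, hz0⟩ := intermediate_value_Ioo' hxy.le (hc.mono hIcc)
        (Set.mem_Ioo.mpr ⟨hyn, hxp⟩)
      exact hnz z (hIcc (Set.Ioo_subset_Icc_self hz)) hz0
    · obtain ⟨z, hz, hz0⟩ := intermediate_value_Ioo hxy.le (hc.mono hIcc)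
        (Set.mem_Ioo.mpr ⟨hxn, hyp⟩)
      exact hnz z (hIcc (Set.Ioo_subset_Icc_self hz)) hz0
  intro x hx y hy
  rcases lt_trichotomy x y with h | rfl | h
  · exact key x y hx hy h
  · exact mul_self_pos.mpr (hnz x hx)
  · rw [mul_comm]; exact key y x hy hx h

lemma claimA {g : ℝ → ℝ} {u v : ℝ} (huv : u < v)
    (hau : AnalyticAt ℝ g u) (hav : AnalyticAt ℝ g v)
    (hevu : ¬ ∀ᶠ z in 𝓝 u, g z = 0) (hevv : ¬ ∀ᶠ z in 𝓝 v, g z = 0)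
    (hcont : ContinuousOn g (Set.Ioo u v))
    (hnz : ∀ x ∈ Set.Ioo u v, g x ≠ 0) :
    sgRight g u = sgLeft g v := by
  obtain ⟨hRne, -, δ1, hδ1, hR, -⟩ := local_sign hau hevu
  obtain ⟨-, hLne, δ2, hδ2, -, hL⟩ := local_sign hav hevv
  set x1 := min (u + δ1/2) ((u+v)/2) with hx1def
  set x2 := max (v - δ2/2) ((u+v)/2) with hx2def
  have hx1a : u < x1 := lt_min (by linarith) (by linarith)
  have hx1b : x1 < u + δ1 := lt_of_le_of_lt (min_le_left _ _) (by linarith)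
  have hx1c : x1 < v := lt_of_le_of_lt (min_le_right _ _) (by linarith)
  have hx2a : v - δ2 < x2 := lt_of_lt_of_le (by linarith) (le_max_left _ _)
  have hx2b : x2 < v := max_lt (by linarith) (by linarith)
  have hx2c : u < x2 := lt_of_lt_of_le (by linarith) (le_max_right _ _)
  have h1 : 0 < g x1 * sgRight g u := hR x1 hx1a hx1b
  have h2 : 0 < g x2 * sgLeft g v := hL x2 hx2a hx2b
  have h3 : 0 < g x1 * g x2 := sign_const_on hcont hnz x1 ⟨hx1a, hx1c⟩ x2 ⟨hx2c, hx2b⟩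
  have h4 : 0 < sgRight g u * g x1 := by rwa [mul_comm] at h1
  have h5 : 0 < sgRight g u * g x2 := mulposchain h4 h3
  have h6 : 0 < sgRight g u * sgLeft g v := mulposchain h5 h2
  exact sign_eq_of_mul_pos (sgRight_trich g u) (sgLeft_trich g v) h6

end Analytic
open Filter Topology
theorem stmt_18 (a b a' b' : ℝ) (hab : a < b) (ha' : a' < a) (hb' : b < b')
    (N : ℕ) (f : ℕ → ℝ → ℝ)
    (han : ∀ i ≤ N, AnalyticOnNhd ℝ (f i) (Set.Ioo a' b'))
    (hnz : ∀ i ≤ N, ∃ x ∈ Set.Ioo a' b', f i x ≠ 0)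
    (hS : IsSturmSequence a b N f) :
    {x ∈ Set.Ioo a b | f 0 x = 0}.ncard =
      signVar (List.ofFn fun i : Fin (N + 1) => sgRight (f i) a) -
        signVar (List.ofFn fun i : Fin (N + 1) => sgLeft (f i) b) := by
  obtain ⟨hScont, hS1, hS2, hS3⟩ := hS
  have hIcc : Set.Icc a b ⊆ Set.Ioo a' b' := fun x hx =>
    ⟨lt_of_lt_of_le ha' hx.1, lt_of_le_of_lt hx.2 hb'⟩
  -- no f i is eventually zero anywhere
  have hnev : ∀ i ≤ N, ∀ c ∈ Set.Ioo a' b', ¬ ∀ᶠ z in 𝓝 c, f i z = 0 := by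
    intro i hi c hc hev
    obtain ⟨x, hx, hfx⟩ := hnz i hi
    have heq : f i =ᶠ[𝓝 c] 0 := by filter_upwards [hev] with z hz; simpa using hz
    have := (han i hi).eqOn_zero_of_preconnected_of_eventuallyEq_zero
      isPreconnected_Ioo hc heq hx
    exact hfx (by simpa using this)
  have hloc : ∀ i ≤ N, ∀ c ∈ Set.Icc a b,
      sgRight (f i) c ≠ 0 ∧ sgLeft (f i) c ≠ 0 ∧
      ∃ δ > 0, (∀ x, c < x → x < c + δ → 0 < f i x * sgRight (f i) c) ∧
               (∀ x, c - δ < x → x < c → 0 < f i x * sgLeft (f i) c) :=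
    fun i hi c hc => local_sign (han i hi c (hIcc hc)) (hnev i hi c (hIcc hc))
  -- finiteness of zero sets
  have hfinone : ∀ i, i ≤ N → {x ∈ Set.Icc a b | f i x = 0}.Finite := by
    intro i hi
    have hiso : ∀ c : ℝ, ∃ δ > 0, c ∈ Set.Icc a b →
        ∀ x ∈ Set.Ioo (c - δ) (c + δ), x ≠ c → f i x ≠ 0 := by
      intro c
      by_cases hc : c ∈ Set.Icc a b
      · obtain ⟨-, -, δ, hδ, hR, hL⟩ := hloc i hi c hc
        refine ⟨δ, hδ, fun _ x hx hne h0 => ?_⟩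
        rcases hne.lt_or_gt with hlt | hgt
        · have := hL x hx.1 hlt; rw [h0, zero_mul] at this; exact lt_irrefl 0 this
        · have := hR x hgt hx.2; rw [h0, zero_mul] at this; exact lt_irrefl 0 this
      · exact ⟨1, one_pos, fun h => absurd h hc⟩
    choose δ hδpos hδ using hiso
    obtain ⟨t, htmem, htcov⟩ := isCompact_Icc.elim_nhds_subcover
      (fun c => Set.Ioo (c - δ c) (c + δ c))
      (fun c _ => Ioo_mem_nhds (by linarith [hδpos c]) (by linarith [hδpos c]))
    apply Set.Finite.subset t.finite_toSet
    rintro x ⟨hx, h0⟩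
    have hx2 := htcov hx
    simp only [Set.mem_iUnion, exists_prop] at hx2
    obtain ⟨c, hct, hxc⟩ := hx2
    by_cases hxe : x = c
    · subst hxe; exact hct
    · exact absurd h0 (hδ c (htmem c hct) x hxc hxe)
  set Z : Set ℝ := {x ∈ Set.Icc a b | ∃ i ≤ N, f i x = 0} with hZdef
  have hZfin : Z.Finite := by
    apply Set.Finite.subset ((Set.finite_Iic N).biUnion
      (fun i (hi : i ∈ Set.Iic N) => hfinone i hi))
    rintro x ⟨hx, i, hi, h0⟩
    exact Set.mem_biUnion hi ⟨hx, h0⟩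
  -- claim A: sign variations match across zero-free intervals
  have hAeq : ∀ u v : ℝ, u ∈ Set.Icc a b → v ∈ Set.Icc a b → u < v →
      (∀ x ∈ Set.Ioo u v, ∀ i ≤ N, f i x ≠ 0) →
      signVar (List.ofFn fun i : Fin (N + 1) => sgRight (f i) u) =
        signVar (List.ofFn fun i : Fin (N + 1) => sgLeft (f i) v) := by
    intro u v hu hv huv hno
    have : (List.ofFn fun i : Fin (N + 1) => sgRight (f i) u) =
        (List.ofFn fun i : Fin (N + 1) => sgLeft (f i) v) := by
      apply congrArg
      funext i
      have hi : (i : ℕ) ≤ N := Fin.is_le i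
      have hsubuv : Set.Ioo u v ⊆ Set.Ioo a' b' := fun x hx =>
        hIcc ⟨hu.1.trans hx.1.le, hx.2.le.trans hv.2⟩
      exact claimA huv (han i hi u (hIcc hu)) (han i hi v (hIcc hv))
        (hnev i hi u (hIcc hu)) (hnev i hi v (hIcc hv))
        (((han i hi).continuousOn).mono hsubuv)
        (fun x hx => hno x hx i hi)
    rw [this]
  -- claim B: crossing a point c
  have claimB : ∀ c ∈ Set.Ioo a b,
      signVar (List.ofFn fun i : Fin (N + 1) => sgLeft (f i) c) =
        signVar (List.ofFn fun i : Fin (N + 1) => sgRight (f i) c) +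
          (if f 0 c = 0 then 1 else 0) := by
    intro c hc
    have hcIcc : c ∈ Set.Icc a b := Set.Ioo_subset_Icc_self hc
    have hLneB : ∀ i ≤ N, sgLeft (f i) c ≠ 0 := fun i hi => (hloc i hi c hcIcc).2.1
    have hRneB : ∀ i ≤ N, sgRight (f i) c ≠ 0 := fun i hi => (hloc i hi c hcIcc).1
    have hNne : f N c ≠ 0 := hS3 c hc
    have husgn : ∀ i, Real.sign (f i c) ≠ 0 ↔ f i c ≠ 0 := by
      intro i; rw [Ne, Real.sign_eq_zero_iff]
    by_cases h0 : f 0 c = 0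
    · -- N = M + 1
      have hN1 : N ≠ 0 := by rintro rfl; exact hNne h0
      obtain ⟨M, rfl⟩ : ∃ M, N = M + 1 := ⟨N - 1, by omega⟩
      have hf1 : f 1 c ≠ 0 := by
        rcases Nat.eq_zero_or_pos M with rfl | hM
        · exact hNne
        · intro h1
          have := hS2 1 le_rfl (by omega) c hc h1
          rw [show (1:ℕ) - 1 = 0 from rfl, h0, zero_mul] at this
          exact lt_irrefl 0 this
      -- head sign relations
      obtain ⟨ε, hε, hεsub, hεf1, hεneg, hεpos⟩ := hS1 c hc h0
      obtain ⟨-, -, δ0, hδ0, hR0, hL0⟩ := hloc 0 (by omega) c hcIcc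
      obtain ⟨-, -, δ1, hδ1, hR1, hL1⟩ := hloc 1 (by omega) c hcIcc
      set η := min ε (min δ0 δ1) with hηdef
      have hη : 0 < η := lt_min hε (lt_min hδ0 hδ1)
      have hηε : η ≤ ε := min_le_left _ _
      have hηδ0 : η ≤ δ0 := (min_le_right _ _).trans (min_le_left _ _)
      have hηδ1 : η ≤ δ1 := (min_le_right _ _).trans (min_le_right _ _)
      have hrr : 0 < sgRight (f 0) c * sgRight (f 1) c := by
        have h1 := hR0 (c + η/2) (by linarith) (by linarith)
        have h2 := hR1 (c + η/2) (by linarith) (by linarith)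
        have h3 : 0 < f 0 (c + η/2) * f 1 (c + η/2) := hεpos (c + η/2) (by linarith) (by linarith)
        exact pos_of_chain h1 h2 h3
      have hll : sgLeft (f 0) c * sgLeft (f 1) c < 0 := by
        have h1 := hL0 (c - η/2) (by linarith) (by linarith)
        have h2 := hL1 (c - η/2) (by linarith) (by linarith)
        have h3 : f 0 (c - η/2) * f 1 (c - η/2) < 0 := hεneg (c - η/2) (by linarith) (by linarith)
        exact neg_of_chain h1 h2 h3
      -- expose two heads on both lists
      rw [ofFn_shift (fun k => sgLeft (f k) c) (M+1),
          ofFn_shift (fun k => sgLeft (f (k+1)) c) M,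
          ofFn_shift (fun k => sgRight (f k) c) (M+1),
          ofFn_shift (fun k => sgRight (f (k+1)) c) M]
      norm_num [add_assoc]
      rw [signVar_cons_cons (hLneB 0 (by omega)) (hLneB 1 (by omega)),
          signVar_cons_cons (hRneB 0 (by omega)) (hRneB 1 (by omega))]
      -- tails agree with the sign-of-value tails
      have hcombL := key_comb M (fun k => Real.sign (f (k+1) c)) (fun k => sgLeft (f (k+1)) c)
        (fun i hi2 => hLneB (i+1) (by omega))
        (fun i hi2 hu => sgLeft_of_ne_zero ((husgn (i+1)).mp hu))
        (fun i hi1 hi2 hu => by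
          have hz : f (i+1) c = 0 := by
            by_contra hcon
            exact ((husgn (i+1)).mpr hcon) hu
          have := hS2 (i+1) (by omega) (by omega) c hc hz
          have e : i + 1 - 1 = i := by omega
          rw [e] at this
          have hsgn := sign_mul_sign_neg this
          show Real.sign (f (i - 1 + 1) c) * Real.sign (f (i + 1 + 1) c) < 0
          have e2 : i - 1 + 1 = i := by omega
          have e3 : i + 1 + 1 = i + 2 := by omega
          rw [e2, e3]
          exact hsgn)
        ((husgn 1).mpr hf1) ((husgn (M+1)).mpr hNne)
      have hcombR := key_comb M (fun k => Real.sign (f (k+1) c)) (fun k => sgRight (f (k+1)) c)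
        (fun i hi2 => hRneB (i+1) (by omega))
        (fun i hi2 hu => sgRight_of_ne_zero ((husgn (i+1)).mp hu))
        (fun i hi1 hi2 hu => by
          have hz : f (i+1) c = 0 := by
            by_contra hcon
            exact ((husgn (i+1)).mpr hcon) hu
          have := hS2 (i+1) (by omega) (by omega) c hc hz
          have e : i + 1 - 1 = i := by omega
          rw [e] at this
          have hsgn := sign_mul_sign_neg this
          show Real.sign (f (i - 1 + 1) c) * Real.sign (f (i + 1 + 1) c) < 0
          have e2 : i - 1 + 1 = i := by omega
          have e3 : i + 1 + 1 = i + 2 := by omega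
          rw [e2, e3]
          exact hsgn)
        ((husgn 1).mpr hf1) ((husgn (M+1)).mpr hNne)
      rw [ofFn_shift (fun k => sgLeft (f (k+1)) c) M,
          ofFn_shift (fun k => Real.sign (f (k+1) c)) M] at hcombL
      rw [ofFn_shift (fun k => sgRight (f (k+1)) c) M,
          ofFn_shift (fun k => Real.sign (f (k+1) c)) M] at hcombR
      norm_num [add_assoc] at hcombL hcombR
      rw [hcombL, hcombR, if_pos hll, if_neg (not_lt.mpr hrr.le), if_pos h0]
      omega
    · -- f 0 c ≠ 0
      have hcombL := key_comb N (fun k => Real.sign (f k c)) (fun k => sgLeft (f k) c)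
        (fun i hi2 => hLneB i hi2)
        (fun i hi2 hu => sgLeft_of_ne_zero ((husgn i).mp hu))
        (fun i hi1 hi2 hu => by
          have hz : f i c = 0 := by
            by_contra hcon
            exact ((husgn i).mpr hcon) hu
          have := hS2 i (by omega) (by omega) c hc hz
          exact sign_mul_sign_neg this)
        ((husgn 0).mpr h0) ((husgn N).mpr hNne)
      have hcombR := key_comb N (fun k => Real.sign (f k c)) (fun k => sgRight (f k) c)
        (fun i hi2 => hRneB i hi2)
        (fun i hi2 hu => sgRight_of_ne_zero ((husgn i).mp hu))
        (fun i hi1 hi2 hu => by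
          have hz : f i c = 0 := by
            by_contra hcon
            exact ((husgn i).mpr hcon) hu
          have := hS2 i (by omega) (by omega) c hc hz
          exact sign_mul_sign_neg this)
        ((husgn 0).mpr h0) ((husgn N).mpr hNne)
      rw [if_neg h0, add_zero]
      exact hcombL.trans hcombR.symm
  -- main telescoping induction
  have main : ∀ n : ℕ, ∀ u v : ℝ, u ∈ Set.Icc a b → v ∈ Set.Icc a b → u < v →
      (Z ∩ Set.Ioo u v).ncard = n →
      signVar (List.ofFn fun i : Fin (N + 1) => sgRight (f i) u) =
        {x ∈ Set.Ioo u v | f 0 x = 0}.ncard +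
          signVar (List.ofFn fun i : Fin (N + 1) => sgLeft (f i) v) := by
    intro n
    induction n using Nat.strong_induction_on with
    | _ n ih =>
    intro u v hu hv huv hcard
    by_cases hempty : Z ∩ Set.Ioo u v = ∅
    · have hno : ∀ x ∈ Set.Ioo u v, ∀ i ≤ N, f i x ≠ 0 := by
        intro x hx i hi hzero
        have hxZ : x ∈ Z ∩ Set.Ioo u v :=
          ⟨⟨⟨hu.1.trans hx.1.le, hx.2.le.trans hv.2⟩, i, hi, hzero⟩, hx⟩
        rw [hempty] at hxZ
        exact hxZ
      have hset : {x ∈ Set.Ioo u v | f 0 x = 0} = ∅ := by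
        ext x
        simp only [Set.mem_sep_iff, Set.mem_empty_iff_false, iff_false, not_and]
        exact fun hx => hno x hx 0 (Nat.zero_le N)
      rw [hset, Set.ncard_empty, zero_add]
      exact hAeq u v hu hv huv hno
    · have hne : (Z ∩ Set.Ioo u v).Nonempty := Set.nonempty_iff_ne_empty.mpr hempty
      have hfin : (Z ∩ Set.Ioo u v).Finite := hZfin.inter_of_left _
      have htne : hfin.toFinset.Nonempty := by rwa [Set.Finite.toFinset_nonempty]
      set c := hfin.toFinset.min' htne with hcdef
      have hcZ : c ∈ Z ∩ Set.Ioo u v := by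
        have := hfin.toFinset.min'_mem htne
        rwa [Set.Finite.mem_toFinset] at this
      have hcmin : ∀ x ∈ Z ∩ Set.Ioo u v, c ≤ x := fun x hx =>
        Finset.min'_le _ x ((Set.Finite.mem_toFinset hfin).mpr hx)
      have hcIoo : c ∈ Set.Ioo u v := hcZ.2
      have hcab : c ∈ Set.Ioo a b :=
        ⟨lt_of_le_of_lt hu.1 hcIoo.1, lt_of_lt_of_le hcIoo.2 hv.2⟩
      have hcIcc : c ∈ Set.Icc a b := Set.Ioo_subset_Icc_self hcab
      have hnol : ∀ x ∈ Set.Ioo u c, ∀ i ≤ N, f i x ≠ 0 := by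
        intro x hx i hi h
        have hxZ : x ∈ Z ∩ Set.Ioo u v :=
          ⟨⟨⟨hu.1.trans hx.1.le, (hx.2.trans hcIoo.2).le.trans hv.2⟩, i, hi, h⟩,
            hx.1, hx.2.trans hcIoo.2⟩
        exact absurd (hcmin x hxZ) (not_le.mpr hx.2)
      have e1 := hAeq u c hu hcIcc hcIoo.1 hnol
      have e2 := claimB c hcab
      have hsetdiff : Z ∩ Set.Ioo c v = (Z ∩ Set.Ioo u v) \ {c} := by
        ext x
        constructor
        · rintro ⟨hxZ, hx⟩
          exact ⟨⟨hxZ, hcIoo.1.trans hx.1, hx.2⟩, by simp [(hx.1).ne']⟩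
        · rintro ⟨⟨hxZ, hx⟩, hxc⟩
          have hle : c ≤ x := hcmin x ⟨hxZ, hx⟩
          have hlt : c < x := lt_of_le_of_ne hle (by simpa [eq_comm] using hxc)
          exact ⟨hxZ, hlt, hx.2⟩
      have hcard2 : (Z ∩ Set.Ioo c v).ncard = n - 1 := by
        rw [hsetdiff, Set.ncard_diff_singleton_of_mem hcZ, hcard]
      have hn1 : 1 ≤ n := by
        rw [← hcard]
        exact (Set.ncard_pos hfin).mpr hne
      have e3 := ih (n-1) (by omega) c v hcIcc hv hcIoo.2 hcard2
      have hfin0 : {x ∈ Set.Ioo c v | f 0 x = 0}.Finite := by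
        apply hZfin.subset
        rintro x ⟨hx, hx0⟩
        exact ⟨⟨(hcab.1.trans hx.1).le, hx.2.le.trans hv.2⟩, 0, Nat.zero_le N, hx0⟩
      by_cases hz0 : f 0 c = 0
      · have hzeq : {x ∈ Set.Ioo u v | f 0 x = 0} =
            insert c {x ∈ Set.Ioo c v | f 0 x = 0} := by
          ext x
          simp only [Set.mem_sep_iff, Set.mem_insert_iff, Set.mem_Ioo]
          constructor
          · rintro ⟨⟨hx1, hx2⟩, hx0⟩
            rcases lt_trichotomy x c with hlt | heq | hgt
            · exact absurd hx0 (hnol x ⟨hx1, hlt⟩ 0 (Nat.zero_le N))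
            · exact Or.inl heq
            · exact Or.inr ⟨⟨hgt, hx2⟩, hx0⟩
          · rintro (rfl | ⟨⟨hx1, hx2⟩, hx0⟩)
            · exact ⟨⟨hcIoo.1, hcIoo.2⟩, hz0⟩
            · exact ⟨⟨hcIoo.1.trans hx1, hx2⟩, hx0⟩
        have hnotmem : c ∉ {x ∈ Set.Ioo c v | f 0 x = 0} := by
          rintro ⟨hx, -⟩
          exact lt_irrefl c hx.1
        rw [hzeq, Set.ncard_insert_of_notMem hnotmem hfin0]
        rw [e1, e2, if_pos hz0, e3]
        omega
      · have hzeq : {x ∈ Set.Ioo u v | f 0 x = 0} = {x ∈ Set.Ioo c v | f 0 x = 0} := by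
          ext x
          simp only [Set.mem_sep_iff, Set.mem_Ioo]
          constructor
          · rintro ⟨⟨hx1, hx2⟩, hx0⟩
            rcases lt_trichotomy x c with hlt | heq | hgt
            · exact absurd hx0 (hnol x ⟨hx1, hlt⟩ 0 (Nat.zero_le N))
            · exact absurd (heq ▸ hx0) hz0
            · exact ⟨⟨hgt, hx2⟩, hx0⟩
          · rintro ⟨⟨hx1, hx2⟩, hx0⟩
            exact ⟨⟨hcIoo.1.trans hx1, hx2⟩, hx0⟩
        rw [hzeq]
        rw [e1, e2, if_neg hz0, e3]
        omega
  have hmain := main (Z ∩ Set.Ioo a b).ncard a b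
    ⟨le_refl a, hab.le⟩ ⟨hab.le, le_refl b⟩ hab rfl
  omega
end
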